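/- Let (H,R) be a braided bialgebra over a field k possessing an invertible central element θ with Δ(θ) = (R·R_21)^{-1}·(θ⊗θ), and let f : H → k be a character. Then the element K'' = (f⊗id)(R·R_21) ∈ H satisfies the reflection equation (K''⊗1)·R·(1⊗K'')·R_21 = R·(1⊗K'')·R_21·(K''⊗1) in H⊗H. -/

import Mathlib

/- Braided bialgebras: basic tensor-leg maps and the universal R-matrix axioms. -/

open scoped TensorProduct

noncomputable section

variable (k H : Type*) [Field k] [Ring H] [Bialgebra k H]

/-- The flip `a ⊗ b ↦ b ⊗ a` on `H ⊗[k] H`, as an algebra homomorphism. -/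
def tflip : H ⊗[k] H →ₐ[k] H ⊗[k] H := (Algebra.TensorProduct.comm k H H).toAlgHom

/-- `s ⊗ t ↦ s ⊗ t ⊗ 1 : H ⊗ H → H ⊗ H ⊗ H`. -/
def leg12 : H ⊗[k] H →ₐ[k] H ⊗[k] (H ⊗[k] H) :=
  Algebra.TensorProduct.map (AlgHom.id k H) Algebra.TensorProduct.includeLeft

/-- `s ⊗ t ↦ s ⊗ 1 ⊗ t : H ⊗ H → H ⊗ H ⊗ H`. -/
def leg13 : H ⊗[k] H →ₐ[k] H ⊗[k] (H ⊗[k] H) :=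
  Algebra.TensorProduct.map (AlgHom.id k H) Algebra.TensorProduct.includeRight

/-- `s ⊗ t ↦ 1 ⊗ s ⊗ t : H ⊗ H → H ⊗ H ⊗ H`. -/
def leg23 : H ⊗[k] H →ₐ[k] H ⊗[k] (H ⊗[k] H) :=
  Algebra.TensorProduct.includeRight

/-- `Δ ⊗ id : H ⊗ H → H ⊗ H ⊗ H`. -/
def comulLeft : H ⊗[k] H →ₐ[k] H ⊗[k] (H ⊗[k] H) :=
  (Algebra.TensorProduct.assoc k k k H H H).toAlgHom.comp
    (Algebra.TensorProduct.map (Bialgebra.comulAlgHom k H) (AlgHom.id k H))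

/-- `id ⊗ Δ : H ⊗ H → H ⊗ H ⊗ H`. -/
def comulRight : H ⊗[k] H →ₐ[k] H ⊗[k] (H ⊗[k] H) :=
  Algebra.TensorProduct.map (AlgHom.id k H) (Bialgebra.comulAlgHom k H)

/-- `(H, R)` is a braided bialgebra with `R⁻¹ = Rinv`:  `R` is an invertible element of
`H ⊗ H` satisfying `Δ(x) · R = R · Δ^op(x)` for all `x` and the two hexagon identities
`(Δ ⊗ id)(R) = R₂₃ · R₁₃` and `(id ⊗ Δ)(R) = R₁₂ · R₁₃`. -/
def IsUniversalRMatrix (R Rinv : H ⊗[k] H) : Prop :=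
  R * Rinv = 1 ∧ Rinv * R = 1 ∧
  (∀ x : H, Bialgebra.comulAlgHom k H x * R = R * tflip k H (Bialgebra.comulAlgHom k H x)) ∧
  comulLeft k H R = leg23 k H R * leg13 k H R ∧
  comulRight k H R = leg12 k H R * leg13 k H R

/-- `ψ ⊗ id : H ⊗ H → H`, `a ⊗ b ↦ ψ(a) • b`. -/
def dualTensorId (ψ : H →ₗ[k] k) : H ⊗[k] H →ₗ[k] H :=
  (TensorProduct.lid k H).toLinearMap.comp (TensorProduct.map ψ LinearMap.id)

/-! ### Auxiliary machinery for the reflection equation -/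

/-- swap the inner (second and third) legs. -/
def sw23 : H ⊗[k] (H ⊗[k] H) →ₐ[k] H ⊗[k] (H ⊗[k] H) :=
  Algebra.TensorProduct.map (AlgHom.id k H) (tflip k H)

/-- swap the first and second legs. -/
def sw12 : H ⊗[k] (H ⊗[k] H) →ₐ[k] H ⊗[k] (H ⊗[k] H) :=
  ((Algebra.TensorProduct.assoc k k k H H H).toAlgHom.comp
    (Algebra.TensorProduct.map (tflip k H) (AlgHom.id k H))).comp
    (Algebra.TensorProduct.assoc k k k H H H).symm.toAlgHom

/-- the cycle `x ⊗ y ⊗ z ↦ y ⊗ z ⊗ x`. -/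
def cyc : H ⊗[k] (H ⊗[k] H) →ₐ[k] H ⊗[k] (H ⊗[k] H) := (sw23 k H).comp (sw12 k H)

/-- the cycle `x ⊗ y ⊗ z ↦ z ⊗ x ⊗ y`. -/
def cyc' : H ⊗[k] (H ⊗[k] H) →ₐ[k] H ⊗[k] (H ⊗[k] H) := (sw12 k H).comp (sw23 k H)

lemma tflip_tmul (x y : H) : tflip k H (x ⊗ₜ[k] y) = y ⊗ₜ[k] x := rfl

lemma sw23_tmul (x y z : H) :
    sw23 k H (x ⊗ₜ[k] (y ⊗ₜ[k] z)) = x ⊗ₜ[k] (z ⊗ₜ[k] y) := by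
  simp [sw23, tflip_tmul]

lemma sw12_tmul (x y z : H) :
    sw12 k H (x ⊗ₜ[k] (y ⊗ₜ[k] z)) = y ⊗ₜ[k] (x ⊗ₜ[k] z) := by
  simp [sw12, Algebra.TensorProduct.assoc_symm_tmul, Algebra.TensorProduct.assoc_tmul,
    tflip_tmul]

lemma cyc_tmul (x y z : H) :
    cyc k H (x ⊗ₜ[k] (y ⊗ₜ[k] z)) = y ⊗ₜ[k] (z ⊗ₜ[k] x) := by
  simp [cyc, sw12_tmul, sw23_tmul]

lemma cyc'_tmul (x y z : H) :
    cyc' k H (x ⊗ₜ[k] (y ⊗ₜ[k] z)) = z ⊗ₜ[k] (x ⊗ₜ[k] y) := by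
  simp [cyc', sw12_tmul, sw23_tmul]

lemma leg12_tmul (u v : H) : leg12 k H (u ⊗ₜ[k] v) = u ⊗ₜ[k] (v ⊗ₜ[k] (1 : H)) := by
  simp [leg12]

lemma leg13_tmul (u v : H) : leg13 k H (u ⊗ₜ[k] v) = u ⊗ₜ[k] ((1 : H) ⊗ₜ[k] v) := by
  simp [leg13]

lemma leg23_tmul (u v : H) : leg23 k H (u ⊗ₜ[k] v) = (1 : H) ⊗ₜ[k] (u ⊗ₜ[k] v) := by
  simp [leg23]

lemma leg23_apply (y : H ⊗[k] H) : leg23 k H y = (1 : H) ⊗ₜ[k] y := by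
  simp [leg23]

lemma tflip_tflip (y : H ⊗[k] H) : tflip k H (tflip k H y) = y := by
  induction y using TensorProduct.induction_on with
  | zero => simp
  | tmul u v => simp [tflip_tmul]
  | add y z hy hz => simp [map_add, hy, hz]

lemma sw12_leg13 (y : H ⊗[k] H) : sw12 k H (leg13 k H y) = leg23 k H y := by
  induction y using TensorProduct.induction_on with
  | zero => simp
  | tmul u v => rw [leg13_tmul, sw12_tmul, leg23_tmul]
  | add y z hy hz => simp [map_add, hy, hz]

lemma sw12_leg23 (y : H ⊗[k] H) : sw12 k H (leg23 k H y) = leg13 k H y := by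
  induction y using TensorProduct.induction_on with
  | zero => simp
  | tmul u v => rw [leg23_tmul, sw12_tmul, leg13_tmul]
  | add y z hy hz => simp [map_add, hy, hz]

lemma sw23_leg12 (y : H ⊗[k] H) : sw23 k H (leg12 k H y) = leg13 k H y := by
  induction y using TensorProduct.induction_on with
  | zero => simp
  | tmul u v => rw [leg12_tmul, sw23_tmul, leg13_tmul]
  | add y z hy hz => simp [map_add, hy, hz]

lemma sw23_leg13 (y : H ⊗[k] H) : sw23 k H (leg13 k H y) = leg12 k H y := by
  induction y using TensorProduct.induction_on with
  | zero => simp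
  | tmul u v => rw [leg13_tmul, sw23_tmul, leg12_tmul]
  | add y z hy hz => simp [map_add, hy, hz]

lemma cyc_leg12 (y : H ⊗[k] H) : cyc k H (leg12 k H y) = leg13 k H (tflip k H y) := by
  induction y using TensorProduct.induction_on with
  | zero => simp
  | tmul u v => rw [leg12_tmul, cyc_tmul, tflip_tmul, leg13_tmul]
  | add y z hy hz => simp [map_add, hy, hz]

lemma cyc_leg13 (y : H ⊗[k] H) : cyc k H (leg13 k H y) = leg23 k H (tflip k H y) := by
  induction y using TensorProduct.induction_on with
  | zero => simp
  | tmul u v => rw [leg13_tmul, cyc_tmul, tflip_tmul, leg23_tmul]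
  | add y z hy hz => simp [map_add, hy, hz]

lemma cyc'_leg23 (y : H ⊗[k] H) : cyc' k H (leg23 k H y) = leg13 k H (tflip k H y) := by
  induction y using TensorProduct.induction_on with
  | zero => simp
  | tmul u v => rw [leg23_tmul, cyc'_tmul, tflip_tmul, leg13_tmul]
  | add y z hy hz => simp [map_add, hy, hz]

lemma cyc'_leg13 (y : H ⊗[k] H) : cyc' k H (leg13 k H y) = leg12 k H (tflip k H y) := by
  induction y using TensorProduct.induction_on with
  | zero => simp
  | tmul u v => rw [leg13_tmul, cyc'_tmul, tflip_tmul, leg12_tmul]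
  | add y z hy hz => simp [map_add, hy, hz]

lemma assoc_tmul_eq_cyc (d : H ⊗[k] H) (p : H) :
    Algebra.TensorProduct.assoc k k k H H H (d ⊗ₜ[k] p) = cyc k H (p ⊗ₜ[k] d) := by
  induction d using TensorProduct.induction_on with
  | zero => simp
  | tmul u v => rw [Algebra.TensorProduct.assoc_tmul, cyc_tmul]
  | add y z hy hz =>
      rw [TensorProduct.add_tmul, TensorProduct.tmul_add, map_add, map_add, hy, hz]

lemma cyc'_assoc_tmul (d : H ⊗[k] H) (q : H) :
    cyc' k H (Algebra.TensorProduct.assoc k k k H H H (d ⊗ₜ[k] q)) = q ⊗ₜ[k] d := by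
  induction d using TensorProduct.induction_on with
  | zero => simp
  | tmul u v => rw [Algebra.TensorProduct.assoc_tmul, cyc'_tmul]
  | add y z hy hz =>
      rw [TensorProduct.add_tmul, map_add, map_add, hy, hz, TensorProduct.tmul_add]

lemma sw12_assoc_tmul (d : H ⊗[k] H) (q : H) :
    sw12 k H (Algebra.TensorProduct.assoc k k k H H H (d ⊗ₜ[k] q))
      = Algebra.TensorProduct.assoc k k k H H H (tflip k H d ⊗ₜ[k] q) := by
  induction d using TensorProduct.induction_on with
  | zero => simp
  | tmul u v => rw [Algebra.TensorProduct.assoc_tmul, sw12_tmul, tflip_tmul,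
      Algebra.TensorProduct.assoc_tmul]
  | add y z hy hz =>
      rw [TensorProduct.add_tmul, map_add, map_add, hy, hz, map_add,
        TensorProduct.add_tmul, map_add]

lemma leg12_eq_assoc (y : H ⊗[k] H) :
    leg12 k H y = Algebra.TensorProduct.assoc k k k H H H (y ⊗ₜ[k] (1 : H)) := by
  induction y using TensorProduct.induction_on with
  | zero => simp
  | tmul u v => rw [leg12_tmul, Algebra.TensorProduct.assoc_tmul]
  | add y z hy hz => rw [map_add, hy, hz, TensorProduct.add_tmul, map_add]

lemma comulLeft_tmul (p q : H) :
    comulLeft k H (p ⊗ₜ[k] q)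
      = Algebra.TensorProduct.assoc k k k H H H ((Bialgebra.comulAlgHom k H p) ⊗ₜ[k] q) := by
  simp [comulLeft]

lemma comulRight_tmul (p q : H) :
    comulRight k H (p ⊗ₜ[k] q) = p ⊗ₜ[k] (Bialgebra.comulAlgHom k H q) := by
  simp [comulRight]

/-- `(Δ ⊗ id)(τ y) = cyc ((id ⊗ Δ) y)`. -/
lemma comulLeft_tflip (y : H ⊗[k] H) :
    comulLeft k H (tflip k H y) = cyc k H (comulRight k H y) := by
  induction y using TensorProduct.induction_on with
  | zero => simp
  | tmul p q => rw [tflip_tmul, comulLeft_tmul, comulRight_tmul, assoc_tmul_eq_cyc]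
  | add y z hy hz => simp [map_add, hy, hz]

/-- `(id ⊗ Δ)(τ y) = cyc' ((Δ ⊗ id) y)`. -/
lemma comulRight_tflip (y : H ⊗[k] H) :
    comulRight k H (tflip k H y) = cyc' k H (comulLeft k H y) := by
  induction y using TensorProduct.induction_on with
  | zero => simp
  | tmul p q => rw [tflip_tmul, comulLeft_tmul, comulRight_tmul, cyc'_assoc_tmul]
  | add y z hy hz => simp [map_add, hy, hz]

/-- `Δᵒᵖ ⊗ id`. -/
def comulLeft' : H ⊗[k] H →ₐ[k] H ⊗[k] (H ⊗[k] H) := (sw12 k H).comp (comulLeft k H)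

/-- `id ⊗ Δᵒᵖ`. -/
def comulRight' : H ⊗[k] H →ₐ[k] H ⊗[k] (H ⊗[k] H) := (sw23 k H).comp (comulRight k H)

section Intertwine

variable {k H}
variable (R : H ⊗[k] H)
  (hR : ∀ x : H, Bialgebra.comulAlgHom k H x * R = R * tflip k H (Bialgebra.comulAlgHom k H x))

include hR

/-- the flipped intertwining relation. -/
lemma flip_intertwine (x : H) :
    tflip k H (Bialgebra.comulAlgHom k H x) * tflip k H R
      = tflip k H R * Bialgebra.comulAlgHom k H x := by
  have := congrArg (tflip k H) (hR x)
  rw [map_mul, map_mul, tflip_tflip] at this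
  exact this

/-- `(Δ ⊗ id)(y) · R₁₂ = R₁₂ · (Δᵒᵖ ⊗ id)(y)`. -/
lemma L1 (y : H ⊗[k] H) :
    comulLeft k H y * leg12 k H R = leg12 k H R * comulLeft' k H y := by
  induction y using TensorProduct.induction_on with
  | zero => simp
  | tmul p q =>
      rw [comulLeft_tmul, comulLeft', AlgHom.comp_apply, comulLeft_tmul, sw12_assoc_tmul,
        leg12_eq_assoc, ← map_mul, ← map_mul, Algebra.TensorProduct.tmul_mul_tmul,
        Algebra.TensorProduct.tmul_mul_tmul, hR p, mul_one, one_mul]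
  | add y z hy hz => simp [map_add, add_mul, mul_add, hy, hz]

/-- `(Δᵒᵖ ⊗ id)(y) · R₂₁₍₁₂₎ = R₂₁₍₁₂₎ · (Δ ⊗ id)(y)`. -/
lemma L1' (y : H ⊗[k] H) :
    comulLeft' k H y * leg12 k H (tflip k H R)
      = leg12 k H (tflip k H R) * comulLeft k H y := by
  induction y using TensorProduct.induction_on with
  | zero => simp
  | tmul p q =>
      rw [comulLeft', AlgHom.comp_apply, comulLeft_tmul, sw12_assoc_tmul,
        leg12_eq_assoc, ← map_mul, ← map_mul, Algebra.TensorProduct.tmul_mul_tmul,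
        Algebra.TensorProduct.tmul_mul_tmul, flip_intertwine R hR p, mul_one, one_mul]
  | add y z hy hz => simp [map_add, add_mul, mul_add, hy, hz]

/-- `(id ⊗ Δᵒᵖ)(y) · R₂₁₍₂₃₎ = R₂₁₍₂₃₎ · (id ⊗ Δ)(y)`. -/
lemma L2' (y : H ⊗[k] H) :
    comulRight' k H y * leg23 k H (tflip k H R)
      = leg23 k H (tflip k H R) * comulRight k H y := by
  induction y using TensorProduct.induction_on with
  | zero => simp
  | tmul p q =>
      have h1 : comulRight' k H (p ⊗ₜ[k] q)
          = p ⊗ₜ[k] tflip k H (Bialgebra.comulAlgHom k H q) := by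
        simp [comulRight', comulRight, sw23]
      rw [h1, comulRight_tmul, leg23_apply, Algebra.TensorProduct.tmul_mul_tmul,
        Algebra.TensorProduct.tmul_mul_tmul, flip_intertwine R hR q, mul_one, one_mul]
  | add y z hy hz => simp [map_add, add_mul, mul_add, hy, hz]

end Intertwine

/-- `f ⊗ id` as an algebra homomorphism `H ⊗ H →ₐ H`. -/
def charMap (f : H →ₐ[k] k) : H ⊗[k] H →ₐ[k] H :=
  Algebra.TensorProduct.lift ((Algebra.ofId k H).comp f) (AlgHom.id k H)
    (fun x y => by
      simpa [Commute, SemiconjBy, Algebra.ofId_apply] using Algebra.commutes (f x) y)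

/-- `f ⊗ id ⊗ id` as an algebra homomorphism `H ⊗ H ⊗ H →ₐ H ⊗ H`. -/
def charMap3 (f : H →ₐ[k] k) : H ⊗[k] (H ⊗[k] H) →ₐ[k] H ⊗[k] H :=
  Algebra.TensorProduct.lift ((Algebra.ofId k (H ⊗[k] H)).comp f) (AlgHom.id k (H ⊗[k] H))
    (fun x y => by
      simpa [Commute, SemiconjBy, Algebra.ofId_apply] using Algebra.commutes (f x) y)

lemma charMap_tmul (f : H →ₐ[k] k) (u v : H) :
    charMap k H f (u ⊗ₜ[k] v) = f u • v := by
  simp [charMap, Algebra.TensorProduct.lift_tmul, Algebra.ofId_apply, ← Algebra.smul_def]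

lemma dualTensorId_eq (f : H →ₐ[k] k) (z : H ⊗[k] H) :
    dualTensorId k H f.toLinearMap z = charMap k H f z := by
  induction z using TensorProduct.induction_on with
  | zero => simp
  | tmul u v => simp [dualTensorId, charMap_tmul]
  | add y z hy hz => simp [map_add, hy, hz]

lemma charMap3_leg12 (f : H →ₐ[k] k) (y : H ⊗[k] H) :
    charMap3 k H f (leg12 k H y) = (charMap k H f y) ⊗ₜ[k] (1 : H) := by
  induction y using TensorProduct.induction_on with
  | zero => simp
  | tmul u v =>
      rw [leg12_tmul, charMap_tmul]
      simp [charMap3, Algebra.TensorProduct.lift_tmul, Algebra.ofId_apply,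
        ← Algebra.smul_def, TensorProduct.smul_tmul']
  | add y z hy hz => simp [map_add, hy, hz, TensorProduct.add_tmul]

lemma charMap3_leg13 (f : H →ₐ[k] k) (y : H ⊗[k] H) :
    charMap3 k H f (leg13 k H y) = (1 : H) ⊗ₜ[k] (charMap k H f y) := by
  induction y using TensorProduct.induction_on with
  | zero => simp
  | tmul u v =>
      rw [leg13_tmul, charMap_tmul]
      have h1 : charMap3 k H f (u ⊗ₜ[k] ((1 : H) ⊗ₜ[k] v))
          = algebraMap k (H ⊗[k] H) (f u) * ((1 : H) ⊗ₜ[k] v) := by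
        simp [charMap3, Algebra.TensorProduct.lift_tmul, Algebra.ofId_apply]
      rw [h1, ← Algebra.smul_def, TensorProduct.tmul_smul]
  | add y z hy hz => simp [map_add, hy, hz, TensorProduct.tmul_add]

lemma charMap3_leg23 (f : H →ₐ[k] k) (y : H ⊗[k] H) :
    charMap3 k H f (leg23 k H y) = y := by
  rw [leg23_apply]
  simp [charMap3, Algebra.TensorProduct.lift_tmul, ← Algebra.TensorProduct.one_def]

/-- The key abstract computation: the reflection equation follows from four
exchange identities. -/
lemma key_identity {T : Type*} [Ring T] (a a' b b' c c' : T)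
    (h1 : c * b * a = a * (b * c))
    (h0 : b' * c' * a = a * (c' * b'))
    (h2 : b * c * a' = a' * (c * b))
    (h3 : a' * b' * c' = c' * (b' * a')) :
    a * a' * c * (b * b') * c' = c * (b * b') * c' * (a * a') := by
  calc a * a' * c * (b * b') * c'
      = a * ((a' * (c * b)) * (b' * c')) := by noncomm_ring
    _ = a * ((b * c * a') * (b' * c')) := by rw [← h2]
    _ = a * (b * c) * (a' * b' * c') := by noncomm_ring
    _ = a * (b * c) * (c' * (b' * a')) := by rw [h3]
    _ = (c * b * a) * (c' * (b' * a')) := by rw [← h1]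
    _ = c * b * (a * (c' * b')) * a' := by noncomm_ring
    _ = c * b * (b' * c' * a) * a' := by rw [← h0]
    _ = c * (b * b') * c' * (a * a') := by noncomm_ring

/-- in a braided bialgebra `(H, R)` possessing an invertible central
element `θ` with `Δ(θ) = (R · R₂₁)⁻¹ · (θ ⊗ θ)`, and given a character `f : H → k`,
the element `K'' = (f ⊗ id)(R · R₂₁)` satisfies the reflection equation
`(K'' ⊗ 1) · R · (1 ⊗ K'') · R₂₁ = R · (1 ⊗ K'') · R₂₁ · (K'' ⊗ 1)` in `H ⊗ H`. -/
theorem reflection_equation_for_f_R_R21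
    (R Rinv : H ⊗[k] H) (hR : IsUniversalRMatrix k H R Rinv)
    (θ θinv : H) (hθ : θ * θinv = 1) (hθ' : θinv * θ = 1)
    (hcentral : ∀ x : H, θ * x = x * θ)
    (hΔθ : Bialgebra.comulAlgHom k H θ
      = (tflip k H Rinv * Rinv) * (θ ⊗ₜ[k] θ))
    (f : H →ₐ[k] k)
    (K : H)
    (hKdef : K = dualTensorId k H f.toLinearMap (R * tflip k H R)) :
    (K ⊗ₜ[k] (1 : H)) * R * ((1 : H) ⊗ₜ[k] K) * tflip k H R
      = R * ((1 : H) ⊗ₜ[k] K) * tflip k H R * (K ⊗ₜ[k] (1 : H)) := by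
  obtain ⟨-, -, hint, hex1, hex2⟩ := hR
  clear hθ hθ' hcentral hΔθ
  set R' := tflip k H R with hR'def
  have hK : K = charMap k H f (R * R') := by rw [hKdef, dualTensorId_eq]
  -- notation for the six legs
  set a := leg12 k H R with ha
  set a' := leg12 k H R' with ha'
  set b := leg13 k H R with hb
  set b' := leg13 k H R' with hb'
  set c := leg23 k H R with hc0
  set c' := leg23 k H R' with hc0'
  -- the four exchange identities
  have hCL : comulLeft k H R = c * b := hex1
  have hCL' : comulLeft' k H R = b * c := by
    rw [comulLeft', AlgHom.comp_apply, hex1, map_mul, hc0, hb, sw12_leg23, sw12_leg13]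
  have hCLf : comulLeft k H R' = b' * c' := by
    rw [hR'def, comulLeft_tflip, hex2, map_mul, ha, hb, cyc_leg12, cyc_leg13, ← hR'def,
      ← hb', ← hc0']
  have hCLf' : comulLeft' k H R' = c' * b' := by
    rw [comulLeft', AlgHom.comp_apply, hCLf, map_mul, hb', hc0', sw12_leg13, sw12_leg23]
  have hCRf : comulRight k H R' = b' * a' := by
    rw [hR'def, comulRight_tflip, hex1, map_mul, hc0, hb, cyc'_leg23, cyc'_leg13, ← hR'def,
      ← hb', ← ha']
  have hCRf' : comulRight' k H R' = a' * b' := by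
    rw [comulRight', AlgHom.comp_apply, hCRf, map_mul, hb', ha', sw23_leg13, sw23_leg12]
  have h1 : c * b * a = a * (b * c) := by
    have := L1 R hint R; rwa [hCL, hCL', ← ha] at this
  have h0 : b' * c' * a = a * (c' * b') := by
    have := L1 R hint R'; rwa [hCLf, hCLf', ← ha] at this
  have h2 : b * c * a' = a' * (c * b) := by
    have := L1' R hint R; rwa [hCL, hCL', ← hR'def, ← ha'] at this
  have h3 : a' * b' * c' = c' * (b' * a') := by
    have := L2' R hint R'; rwa [hCRf, hCRf', ← hR'def, ← hc0'] at this
  have hkey := key_identity a a' b b' c c' h1 h0 h2 h3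
  -- express everything through `charMap3`
  have hK1 : charMap3 k H f (a * a') = K ⊗ₜ[k] (1 : H) := by
    rw [map_mul, ha, ha', charMap3_leg12, charMap3_leg12,
      Algebra.TensorProduct.tmul_mul_tmul, mul_one, ← map_mul, ← hK]
  have hK2 : charMap3 k H f (b * b') = (1 : H) ⊗ₜ[k] K := by
    rw [map_mul, hb, hb', charMap3_leg13, charMap3_leg13,
      Algebra.TensorProduct.tmul_mul_tmul, mul_one, ← map_mul, ← hK]
  have hRc : charMap3 k H f c = R := by rw [hc0, charMap3_leg23]
  have hRc' : charMap3 k H f c' = R' := by rw [hc0', charMap3_leg23]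
  calc (K ⊗ₜ[k] (1 : H)) * R * ((1 : H) ⊗ₜ[k] K) * R'
      = charMap3 k H f (a * a') * charMap3 k H f c * charMap3 k H f (b * b') *
          charMap3 k H f c' := by rw [hK1, hK2, hRc, hRc']
    _ = charMap3 k H f (a * a' * c * (b * b') * c') := by
        simp only [map_mul]
    _ = charMap3 k H f (c * (b * b') * c' * (a * a')) := by rw [hkey]
    _ = charMap3 k H f c * charMap3 k H f (b * b') * charMap3 k H f c' *
          charMap3 k H f (a * a') := by simp only [map_mul]
    _ = R * ((1 : H) ⊗ₜ[k] K) * R' * (K ⊗ₜ[k] (1 : H)) := by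
        rw [hK1, hK2, hRc, hRc']
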